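/- (Theorem 2 of the paper, strongly convex case, with explicit constants.) Let (Ω', 𝓖, μ') be a probability space, let X ⊆ ℝⁿ be nonempty closed convex, let x* ∈ X, let μ > 0, γ > 0 and Ĉ > 0. Let (x_k)_{k≥0} be random vectors in ℝⁿ (with all quantities below measurable and integrable) satisfying, for every k ≥ 0 and with α_k = 2/(μ(k+1)): E[‖x_{k+1} − x*‖²] ≤ (1 − μα_k)·E[‖x_k − x*‖²] − μα_k·E[‖Π_X(x_k) − x*‖²] − γ·E[dist²(x_k, X)] + Ĉ·α_k². For k ≥ 1 set S̄_k = Σ_{t=0}^{k−1} (t+1)², x̂_k = (1/S̄_k)·Σ_{t=0}^{k−1} (t+1)²·x_t, and ŵ_k = (1/S̄_k)·Σ_{t=0}^{k−1} (t+1)²·Π_X(x_t). Then: (i) E[‖ŵ_k − x*‖²] ≤ 2Ĉ·k·(k+1)/(μ²·S̄_k); (ii) E[dist²(x̂_k, X)] ≤ E[‖x̂_k − ŵ_k‖²] ≤ 4Ĉ·k/(γ·μ²·S̄_k); and (iii) E[‖x̂_k − x*‖²] ≤ 4Ĉ·k·(k+1)/(μ²·S̄_k) + 8Ĉ·k/(γ·μ²·S̄_k).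 In particular, E[‖x̂_k − x*‖²] = O(1/k) and E[dist²(x̂_k, X)] = O(1/k²). -/

import Mathlib

open Metric MeasureTheory

/-- `S̄_k = Σ_{t<k} (t+1)²`. -/
noncomputable def Sbar (k : ℕ) : ℝ := ∑ t ∈ Finset.range k, ((t : ℝ) + 1) ^ 2

/-- The weighted average `(1/S̄_k) Σ_{t<k} (t+1)² y_t` of a sequence of
(random) vectors. -/
noncomputable def avgIter2 {n : ℕ} {Ω' : Type*}
    (y : ℕ → Ω' → EuclideanSpace ℝ (Fin n)) (k : ℕ) (ω : Ω') :
    EuclideanSpace ℝ (Fin n) :=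
  (Sbar k)⁻¹ • ∑ t ∈ Finset.range k, ((t : ℝ) + 1) ^ 2 • y t ω


section AuxLemmas

open Metric

lemma aux_normSq_convexOn {E : Type*} [NormedAddCommGroup E] [InnerProductSpace ℝ E] :
    ConvexOn ℝ Set.univ (fun y : E => ‖y‖ ^ 2) := by
  constructor
  · exact convex_univ
  · intro y _ z _ a b ha hb hab
    have hexp : ‖a • y + b • z‖ ^ 2
        = a ^ 2 * ‖y‖ ^ 2 + 2 * (a * b * inner ℝ y z) + b ^ 2 * ‖z‖ ^ 2 := by
      rw [norm_add_sq_real, norm_smul, norm_smul, real_inner_smul_left,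
        real_inner_smul_right, Real.norm_eq_abs, Real.norm_eq_abs,
        abs_of_nonneg ha, abs_of_nonneg hb]
      ring
    have h2 : 2 * (inner ℝ y z : ℝ) ≤ ‖y‖ ^ 2 + ‖z‖ ^ 2 := by
      have := real_inner_le_norm y z
      nlinarith [sq_nonneg (‖y‖ - ‖z‖)]
    have hab' : 0 ≤ a * b := mul_nonneg ha hb
    simp only [smul_eq_mul]
    nlinarith [hexp]

lemma aux_jensen {E : Type*} [NormedAddCommGroup E] [InnerProductSpace ℝ E]
    {ι : Type*} (s : Finset ι) (lam : ι → ℝ)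
    (h0 : ∀ i ∈ s, 0 ≤ lam i) (h1 : ∑ i ∈ s, lam i = 1) (p : ι → E) :
    ‖∑ i ∈ s, lam i • p i‖ ^ 2 ≤ ∑ i ∈ s, lam i * ‖p i‖ ^ 2 := by
  simpa using aux_normSq_convexOn.map_sum_le h0 h1 (fun i _ => Set.mem_univ _)

lemma Sbar_cube (k : ℕ) : (k : ℝ) ^ 3 ≤ 3 * Sbar k := by
  induction k with
  | zero => simp [Sbar]
  | succ m ih =>
    have : Sbar (m + 1) = Sbar m + ((m : ℝ) + 1) ^ 2 := by
      simp [Sbar, Finset.sum_range_succ]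
    rw [this]
    push_cast
    nlinarith [ih, Nat.cast_nonneg (α := ℝ) m]

lemma Sbar_pos {k : ℕ} (hk : 1 ≤ k) : 0 < Sbar k := by
  have h := Sbar_cube k
  have h1 : (1 : ℝ) ≤ (k : ℝ) := by exact_mod_cast hk
  have h3 : (1 : ℝ) ≤ (k : ℝ) ^ 3 := one_le_pow₀ h1
  linarith

lemma avgIter2_eq_sum {n : ℕ} {Ω' : Type*} (y : ℕ → Ω' → EuclideanSpace ℝ (Fin n))
    (k : ℕ) (ω : Ω') :
    avgIter2 y k ω
      = ∑ t ∈ Finset.range k, ((Sbar k)⁻¹ * ((t : ℝ) + 1) ^ 2) • y t ω := by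
  simp [avgIter2, Finset.smul_sum, smul_smul]

lemma lam_sum_one {k : ℕ} (hk : 1 ≤ k) :
    ∑ t ∈ Finset.range k, ((Sbar k)⁻¹ * ((t : ℝ) + 1) ^ 2) = 1 := by
  rw [← Finset.mul_sum]
  exact inv_mul_cancel₀ (Sbar_pos hk).ne'

lemma avgIter2_sub_const {n : ℕ} {Ω' : Type*} (y : ℕ → Ω' → EuclideanSpace ℝ (Fin n))
    {k : ℕ} (hk : 1 ≤ k) (z : EuclideanSpace ℝ (Fin n)) (ω : Ω') :
    avgIter2 y k ω - z
      = ∑ t ∈ Finset.range k, ((Sbar k)⁻¹ * ((t : ℝ) + 1) ^ 2) • (y t ω - z) := by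
  rw [avgIter2_eq_sum]
  simp only [smul_sub, Finset.sum_sub_distrib, ← Finset.sum_smul, lam_sum_one hk, one_smul]

lemma avgIter2_sub_avgIter2 {n : ℕ} {Ω' : Type*}
    (y z : ℕ → Ω' → EuclideanSpace ℝ (Fin n)) (k : ℕ) (ω : Ω') :
    avgIter2 y k ω - avgIter2 z k ω
      = ∑ t ∈ Finset.range k, ((Sbar k)⁻¹ * ((t : ℝ) + 1) ^ 2) • (y t ω - z t ω) := by
  rw [avgIter2_eq_sum, avgIter2_eq_sum]
  simp only [smul_sub, Finset.sum_sub_distrib]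

lemma jensen_avg {n : ℕ} {k : ℕ} (hk : 1 ≤ k) (v : ℕ → EuclideanSpace ℝ (Fin n)) :
    ‖∑ t ∈ Finset.range k, ((Sbar k)⁻¹ * ((t : ℝ) + 1) ^ 2) • v t‖ ^ 2
      ≤ (Sbar k)⁻¹ * ∑ t ∈ Finset.range k, ((t : ℝ) + 1) ^ 2 * ‖v t‖ ^ 2 := by
  have h := aux_jensen (Finset.range k) (fun t => (Sbar k)⁻¹ * ((t : ℝ) + 1) ^ 2)
    (fun t _ => mul_nonneg (inv_nonneg.mpr (Sbar_pos hk).le) (sq_nonneg _))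
    (lam_sum_one hk) v
  refine h.trans_eq ?_
  rw [Finset.mul_sum]
  exact Finset.sum_congr rfl (fun t _ => by ring)

end AuxLemmas

set_option maxHeartbeats 1000000 in
theorem stmt_18 {n : ℕ} {Ω' : Type*} [MeasurableSpace Ω']
    (μ' : Measure Ω') [IsProbabilityMeasure μ']
    (X : Set (EuclideanSpace ℝ (Fin n)))
    (hXne : X.Nonempty) (hXcl : IsClosed X) (hXcv : Convex ℝ X)
    (xstar : EuclideanSpace ℝ (Fin n)) (hxstar : xstar ∈ X)
    (μ γ Chat : ℝ) (hμ : 0 < μ) (hγ : 0 < γ) (hChat : 0 < Chat)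
    (α : ℕ → ℝ) (hα : ∀ k : ℕ, α k = 2 / (μ * ((k : ℝ) + 1)))
    (x : ℕ → Ω' → EuclideanSpace ℝ (Fin n))
    -- `w k ω = Π_X(x k ω)` : projection of the iterates onto `X`
    (w : ℕ → Ω' → EuclideanSpace ℝ (Fin n))
    (hwmem : ∀ k ω, w k ω ∈ X)
    (hwproj : ∀ k ω, ∀ y ∈ X, ‖x k ω - w k ω‖ ≤ ‖x k ω - y‖)
    -- measurability and integrability of all quantities appearing below
    (hmeas : ∀ k, Measurable (x k)) (hmeasw : ∀ k, Measurable (w k))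
    (hInt1 : ∀ k, Integrable (fun ω => ‖x k ω - xstar‖ ^ 2) μ')
    (hInt2 : ∀ k, Integrable (fun ω => ‖w k ω - xstar‖ ^ 2) μ')
    (hInt3 : ∀ k, Integrable (fun ω => (infDist (x k ω) X) ^ 2) μ')
    (hInt4 : ∀ k, Integrable (fun ω => ‖avgIter2 w k ω - xstar‖ ^ 2) μ')
    (hInt5 : ∀ k, Integrable (fun ω => ‖avgIter2 x k ω - avgIter2 w k ω‖ ^ 2) μ')
    (hInt6 : ∀ k, Integrable (fun ω => (infDist (avgIter2 x k ω) X) ^ 2) μ')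
    (hInt7 : ∀ k, Integrable (fun ω => ‖avgIter2 x k ω - xstar‖ ^ 2) μ')
    -- the per-step recurrence (Lemma 6 of the paper)
    (hrec : ∀ k : ℕ, ∫ ω, ‖x (k + 1) ω - xstar‖ ^ 2 ∂μ'
        ≤ (1 - μ * α k) * ∫ ω, ‖x k ω - xstar‖ ^ 2 ∂μ'
          - μ * α k * ∫ ω, ‖w k ω - xstar‖ ^ 2 ∂μ'
          - γ * ∫ ω, (infDist (x k ω) X) ^ 2 ∂μ' + Chat * α k ^ 2) :
    (∀ k : ℕ, 1 ≤ k →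
      (∫ ω, ‖avgIter2 w k ω - xstar‖ ^ 2 ∂μ'
          ≤ 2 * Chat * k * ((k : ℝ) + 1) / (μ ^ 2 * Sbar k)) ∧
      (∫ ω, (infDist (avgIter2 x k ω) X) ^ 2 ∂μ'
          ≤ ∫ ω, ‖avgIter2 x k ω - avgIter2 w k ω‖ ^ 2 ∂μ') ∧
      (∫ ω, ‖avgIter2 x k ω - avgIter2 w k ω‖ ^ 2 ∂μ'
          ≤ 4 * Chat * k / (γ * μ ^ 2 * Sbar k)) ∧
      (∫ ω, ‖avgIter2 x k ω - xstar‖ ^ 2 ∂μ'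
          ≤ 4 * Chat * k * ((k : ℝ) + 1) / (μ ^ 2 * Sbar k)
            + 8 * Chat * k / (γ * μ ^ 2 * Sbar k))) ∧
    -- in particular, `E[‖x̂_k - x*‖²] = O(1/k)` and `E[dist²(x̂_k, X)] = O(1/k²)`
    (∃ C₁ : ℝ, ∀ k : ℕ, 1 ≤ k →
      ∫ ω, ‖avgIter2 x k ω - xstar‖ ^ 2 ∂μ' ≤ C₁ / k) ∧
    (∃ C₂ : ℝ, ∀ k : ℕ, 1 ≤ k →
      ∫ ω, (infDist (avgIter2 x k ω) X) ^ 2 ∂μ' ≤ C₂ / (k : ℝ) ^ 2) := by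
  have hμ0 : μ ≠ 0 := hμ.ne'
  -- shorthand for the three expectation sequences
  set A : ℕ → ℝ := fun j => ∫ ω, ‖x j ω - xstar‖ ^ 2 ∂μ' with hA
  set B : ℕ → ℝ := fun j => ∫ ω, ‖w j ω - xstar‖ ^ 2 ∂μ' with hB
  set D : ℕ → ℝ := fun j => ∫ ω, (infDist (x j ω) X) ^ 2 ∂μ' with hD
  have hA0 : ∀ j, 0 ≤ A j := fun j => integral_nonneg (fun ω => sq_nonneg _)
  have hB0 : ∀ j, 0 ≤ B j := fun j => integral_nonneg (fun ω => sq_nonneg _)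
  have hD0 : ∀ j, 0 ≤ D j := fun j => integral_nonneg (fun ω => sq_nonneg _)
  -- the projection realizes the distance to X
  have hdisteq : ∀ j ω, infDist (x j ω) X = ‖x j ω - w j ω‖ := by
    intro j ω
    refine le_antisymm ?_ ?_
    · rw [← dist_eq_norm]
      exact infDist_le_dist_of_mem (hwmem j ω)
    · by_contra h
      push_neg at h
      obtain ⟨y, hy, hlt⟩ := (infDist_lt_iff hXne).mp h
      rw [dist_eq_norm] at hlt
      exact absurd (hwproj j ω y hy) (by linarith)
  -- the recurrence with the explicit stepsizes
  have hrec' : ∀ K : ℕ, A (K + 1) ≤ (1 - 2 / ((K : ℝ) + 1)) * A K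
      - (2 / ((K : ℝ) + 1)) * B K - γ * D K + 4 * Chat / (μ ^ 2 * ((K : ℝ) + 1) ^ 2) := by
    intro K
    have h := hrec K
    rw [hα] at h
    have hc : ((K : ℝ) + 1) ≠ 0 := by positivity
    have e1 : μ * (2 / (μ * ((K : ℝ) + 1))) = 2 / ((K : ℝ) + 1) := by
      field_simp
    have e2 : Chat * (2 / (μ * ((K : ℝ) + 1))) ^ 2
        = 4 * Chat / (μ ^ 2 * ((K : ℝ) + 1) ^ 2) := by
      field_simp
      ring
    rw [e1, e2] at h
    exact h
  -- key telescoping bound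
  have key : ∀ K : ℕ, ((K : ℝ)) ^ 2 * A K
      + ∑ t ∈ Finset.range K, (2 * ((t : ℝ) + 1) * B t + γ * ((t : ℝ) + 1) ^ 2 * D t)
      ≤ 4 * Chat * K / μ ^ 2 := by
    intro K
    induction K with
    | zero => simp
    | succ m ih =>
      have hrm := hrec' m
      have hc0 : (0 : ℝ) < (m : ℝ) + 1 := by positivity
      have hmul := mul_le_mul_of_nonneg_left hrm (le_of_lt (pow_pos hc0 2))
      have heq : ((m : ℝ) + 1) ^ 2 * ((1 - 2 / ((m : ℝ) + 1)) * A m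
            - (2 / ((m : ℝ) + 1)) * B m - γ * D m
            + 4 * Chat / (μ ^ 2 * ((m : ℝ) + 1) ^ 2))
          = ((m : ℝ) ^ 2 - 1) * A m - 2 * ((m : ℝ) + 1) * B m
            - γ * (((m : ℝ) + 1) ^ 2 * D m) + 4 * Chat / μ ^ 2 := by
        field_simp
        ring
      rw [heq] at hmul
      rw [Finset.sum_range_succ]
      push_cast
      have h1 : ((m : ℝ) ^ 2 - 1) * A m ≤ (m : ℝ) ^ 2 * A m :=
        mul_le_mul_of_nonneg_right (by linarith) (hA0 m)
      have hsplit : 4 * Chat * ((m : ℝ) + 1) / μ ^ 2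
          = 4 * Chat * (m : ℝ) / μ ^ 2 + 4 * Chat / μ ^ 2 := by ring
      rw [hsplit]
      linarith [ih, hmul, h1]
  -- now fix k ≥ 1 and derive the four bounds
  have main : ∀ k : ℕ, 1 ≤ k →
      (∫ ω, ‖avgIter2 w k ω - xstar‖ ^ 2 ∂μ'
          ≤ 2 * Chat * k * ((k : ℝ) + 1) / (μ ^ 2 * Sbar k)) ∧
      (∫ ω, (infDist (avgIter2 x k ω) X) ^ 2 ∂μ'
          ≤ ∫ ω, ‖avgIter2 x k ω - avgIter2 w k ω‖ ^ 2 ∂μ') ∧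
      (∫ ω, ‖avgIter2 x k ω - avgIter2 w k ω‖ ^ 2 ∂μ'
          ≤ 4 * Chat * k / (γ * μ ^ 2 * Sbar k)) ∧
      (∫ ω, ‖avgIter2 x k ω - xstar‖ ^ 2 ∂μ'
          ≤ 4 * Chat * k * ((k : ℝ) + 1) / (μ ^ 2 * Sbar k)
            + 8 * Chat * k / (γ * μ ^ 2 * Sbar k)) := by
    intro k hk
    have hS : 0 < Sbar k := Sbar_pos hk
    have hS0 : Sbar k ≠ 0 := hS.ne'
    have hk1 : (1 : ℝ) ≤ (k : ℝ) := by exact_mod_cast hk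
    have hkey := key k
    have hkA : 0 ≤ ((k : ℝ)) ^ 2 * A k :=
      mul_nonneg (sq_nonneg _) (hA0 k)
    -- bound on ∑ (t+1) B t
    have hsumB : ∑ t ∈ Finset.range k, ((t : ℝ) + 1) * B t ≤ 2 * Chat * k / μ ^ 2 := by
      have h1 : ∑ t ∈ Finset.range k, 2 * (((t : ℝ) + 1) * B t)
          ≤ ∑ t ∈ Finset.range k,
            (2 * ((t : ℝ) + 1) * B t + γ * ((t : ℝ) + 1) ^ 2 * D t) := by
        refine Finset.sum_le_sum (fun t _ => ?_)
        have : 0 ≤ γ * ((t : ℝ) + 1) ^ 2 * D t := by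
          have := hD0 t; positivity
        linarith
      rw [← Finset.mul_sum] at h1
      have hhalf : 4 * Chat * (k : ℝ) / μ ^ 2 = 2 * (2 * Chat * (k : ℝ) / μ ^ 2) := by ring
      linarith [hkey, hkA, h1, hhalf]
    -- bound on ∑ (t+1)² D t
    have hsumD : ∑ t ∈ Finset.range k, ((t : ℝ) + 1) ^ 2 * D t
        ≤ 4 * Chat * k / (γ * μ ^ 2) := by
      have h1 : ∑ t ∈ Finset.range k, γ * (((t : ℝ) + 1) ^ 2 * D t)
          ≤ ∑ t ∈ Finset.range k,
            (2 * ((t : ℝ) + 1) * B t + γ * ((t : ℝ) + 1) ^ 2 * D t) := by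
        refine Finset.sum_le_sum (fun t _ => ?_)
        have : 0 ≤ 2 * ((t : ℝ) + 1) * B t := by
          have := hB0 t; positivity
        have hassoc : γ * (((t : ℝ) + 1) ^ 2 * D t) = γ * ((t : ℝ) + 1) ^ 2 * D t := by ring
        linarith [hassoc.le]
      rw [← Finset.mul_sum] at h1
      have h2 : γ * ∑ t ∈ Finset.range k, ((t : ℝ) + 1) ^ 2 * D t
          ≤ 4 * Chat * k / μ ^ 2 := by linarith [hkey, hkA]
      have h3 := (div_le_div_iff_of_pos_right hγ).mpr h2
      rwa [mul_div_cancel_left₀ _ hγ.ne', div_div, mul_comm (μ ^ 2) γ] at h3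
    -- bound on ∑ (t+1)² B t
    have hsumB2 : ∑ t ∈ Finset.range k, ((t : ℝ) + 1) ^ 2 * B t
        ≤ 2 * Chat * (k : ℝ) ^ 2 / μ ^ 2 := by
      have h1 : ∑ t ∈ Finset.range k, ((t : ℝ) + 1) ^ 2 * B t
          ≤ ∑ t ∈ Finset.range k, (k : ℝ) * (((t : ℝ) + 1) * B t) := by
        refine Finset.sum_le_sum (fun t ht => ?_)
        have htk : ((t : ℝ) + 1) ≤ (k : ℝ) := by
          have := Finset.mem_range.mp ht
          exact_mod_cast Nat.succ_le_of_lt this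
        nlinarith [mul_nonneg (mul_nonneg (by positivity : (0:ℝ) ≤ (t : ℝ) + 1)
          (hB0 t)) (sub_nonneg.mpr htk)]
      rw [← Finset.mul_sum] at h1
      have h2 := mul_le_mul_of_nonneg_left hsumB (le_trans zero_le_one hk1)
      calc ∑ t ∈ Finset.range k, ((t : ℝ) + 1) ^ 2 * B t
          ≤ (k : ℝ) * ∑ t ∈ Finset.range k, ((t : ℝ) + 1) * B t := h1
        _ ≤ (k : ℝ) * (2 * Chat * k / μ ^ 2) := h2
        _ = 2 * Chat * (k : ℝ) ^ 2 / μ ^ 2 := by ring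
    -- (i)
    have hIntW : Integrable (fun ω => (Sbar k)⁻¹
        * ∑ t ∈ Finset.range k, ((t : ℝ) + 1) ^ 2 * ‖w t ω - xstar‖ ^ 2) μ' :=
      (integrable_finset_sum _ (fun t _ => (hInt2 t).const_mul _)).const_mul _
    have hi : ∫ ω, ‖avgIter2 w k ω - xstar‖ ^ 2 ∂μ'
        ≤ (Sbar k)⁻¹ * ∑ t ∈ Finset.range k, ((t : ℝ) + 1) ^ 2 * B t := by
      have hptw : ∀ ω, ‖avgIter2 w k ω - xstar‖ ^ 2 ≤ (Sbar k)⁻¹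
          * ∑ t ∈ Finset.range k, ((t : ℝ) + 1) ^ 2 * ‖w t ω - xstar‖ ^ 2 := by
        intro ω
        rw [avgIter2_sub_const w hk xstar ω]
        exact jensen_avg hk _
      calc ∫ ω, ‖avgIter2 w k ω - xstar‖ ^ 2 ∂μ'
          ≤ ∫ ω, (Sbar k)⁻¹
              * ∑ t ∈ Finset.range k, ((t : ℝ) + 1) ^ 2 * ‖w t ω - xstar‖ ^ 2 ∂μ' :=
            integral_mono (hInt4 k) hIntW hptw
        _ = (Sbar k)⁻¹ * ∑ t ∈ Finset.range k, ((t : ℝ) + 1) ^ 2 * B t := by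
            rw [integral_const_mul, integral_finset_sum _ (fun t _ => (hInt2 t).const_mul _)]
            congr 1
            exact Finset.sum_congr rfl (fun t _ => integral_const_mul _ _)
    have hiBound : ∫ ω, ‖avgIter2 w k ω - xstar‖ ^ 2 ∂μ'
        ≤ 2 * Chat * k * ((k : ℝ) + 1) / (μ ^ 2 * Sbar k) := by
      have h1 := mul_le_mul_of_nonneg_left hsumB2 (inv_nonneg.mpr hS.le)
      have hk0 : (0 : ℝ) < (k : ℝ) := by linarith
      have h2 : (Sbar k)⁻¹ * (2 * Chat * (k : ℝ) ^ 2 / μ ^ 2)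
          ≤ 2 * Chat * (k : ℝ) * ((k : ℝ) + 1) / (μ ^ 2 * Sbar k) := by
        have hnum : (Sbar k)⁻¹ * (2 * Chat * (k : ℝ) ^ 2 / μ ^ 2)
            = 2 * Chat * (k : ℝ) ^ 2 / (μ ^ 2 * Sbar k) := by
          field_simp
        rw [hnum, div_le_div_iff₀ (by positivity) (by positivity)]
        nlinarith [mul_nonneg (mul_nonneg hChat.le hk0.le)
          (mul_pos (pow_pos hμ 2) hS).le]
      linarith [hi, h1, h2]
    -- membership of the averaged projections
    have hwavg_mem : ∀ ω, avgIter2 w k ω ∈ X := by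
      intro ω
      rw [avgIter2_eq_sum]
      exact hXcv.sum_mem
        (fun t _ => mul_nonneg (inv_nonneg.mpr hS.le) (sq_nonneg _))
        (lam_sum_one hk) (fun t _ => hwmem t ω)
    -- (ii)
    have hii : ∫ ω, (infDist (avgIter2 x k ω) X) ^ 2 ∂μ'
        ≤ ∫ ω, ‖avgIter2 x k ω - avgIter2 w k ω‖ ^ 2 ∂μ' := by
      refine integral_mono (hInt6 k) (hInt5 k) (fun ω => ?_)
      have h1 : infDist (avgIter2 x k ω) X ≤ ‖avgIter2 x k ω - avgIter2 w k ω‖ := by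
        rw [← dist_eq_norm]
        exact infDist_le_dist_of_mem (hwavg_mem ω)
      exact pow_le_pow_left₀ infDist_nonneg h1 2
    -- (iii) second part
    have hIntD : Integrable (fun ω => (Sbar k)⁻¹
        * ∑ t ∈ Finset.range k, ((t : ℝ) + 1) ^ 2 * (infDist (x t ω) X) ^ 2) μ' :=
      (integrable_finset_sum _ (fun t _ => (hInt3 t).const_mul _)).const_mul _
    have hiii : ∫ ω, ‖avgIter2 x k ω - avgIter2 w k ω‖ ^ 2 ∂μ'
        ≤ (Sbar k)⁻¹ * ∑ t ∈ Finset.range k, ((t : ℝ) + 1) ^ 2 * D t := by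
      have hptw : ∀ ω, ‖avgIter2 x k ω - avgIter2 w k ω‖ ^ 2 ≤ (Sbar k)⁻¹
          * ∑ t ∈ Finset.range k, ((t : ℝ) + 1) ^ 2 * (infDist (x t ω) X) ^ 2 := by
        intro ω
        rw [avgIter2_sub_avgIter2 x w k ω]
        refine (jensen_avg hk _).trans_eq ?_
        congr 1
        exact Finset.sum_congr rfl (fun t _ => by rw [hdisteq t ω])
      calc ∫ ω, ‖avgIter2 x k ω - avgIter2 w k ω‖ ^ 2 ∂μ'
          ≤ ∫ ω, (Sbar k)⁻¹
              * ∑ t ∈ Finset.range k, ((t : ℝ) + 1) ^ 2 * (infDist (x t ω) X) ^ 2 ∂μ' :=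
            integral_mono (hInt5 k) hIntD hptw
        _ = (Sbar k)⁻¹ * ∑ t ∈ Finset.range k, ((t : ℝ) + 1) ^ 2 * D t := by
            rw [integral_const_mul, integral_finset_sum _ (fun t _ => (hInt3 t).const_mul _)]
            congr 1
            exact Finset.sum_congr rfl (fun t _ => integral_const_mul _ _)
    have hiiiBound : ∫ ω, ‖avgIter2 x k ω - avgIter2 w k ω‖ ^ 2 ∂μ'
        ≤ 4 * Chat * k / (γ * μ ^ 2 * Sbar k) := by
      have h1 := mul_le_mul_of_nonneg_left hsumD (inv_nonneg.mpr hS.le)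
      have h2 : (Sbar k)⁻¹ * (4 * Chat * (k : ℝ) / (γ * μ ^ 2))
          = 4 * Chat * (k : ℝ) / (γ * μ ^ 2 * Sbar k) := by
        field_simp
      linarith [hiii, h1, h2.le, h2.ge]
    -- (iii) first part
    have hiv : ∫ ω, ‖avgIter2 x k ω - xstar‖ ^ 2 ∂μ'
        ≤ 4 * Chat * k * ((k : ℝ) + 1) / (μ ^ 2 * Sbar k)
          + 8 * Chat * k / (γ * μ ^ 2 * Sbar k) := by
      have hptw : ∀ ω, ‖avgIter2 x k ω - xstar‖ ^ 2
          ≤ 2 * ‖avgIter2 x k ω - avgIter2 w k ω‖ ^ 2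
            + 2 * ‖avgIter2 w k ω - xstar‖ ^ 2 := by
        intro ω
        have h := norm_add_le (avgIter2 x k ω - avgIter2 w k ω) (avgIter2 w k ω - xstar)
        rw [sub_add_sub_cancel] at h
        nlinarith [h, sq_nonneg (‖avgIter2 x k ω - avgIter2 w k ω‖
            - ‖avgIter2 w k ω - xstar‖),
          norm_nonneg (avgIter2 x k ω - avgIter2 w k ω),
          norm_nonneg (avgIter2 w k ω - xstar),
          norm_nonneg (avgIter2 x k ω - xstar)]
      have hIntR : Integrable (fun ω => 2 * ‖avgIter2 x k ω - avgIter2 w k ω‖ ^ 2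
          + 2 * ‖avgIter2 w k ω - xstar‖ ^ 2) μ' :=
        ((hInt5 k).const_mul 2).add ((hInt4 k).const_mul 2)
      have h1 : ∫ ω, ‖avgIter2 x k ω - xstar‖ ^ 2 ∂μ'
          ≤ 2 * (∫ ω, ‖avgIter2 x k ω - avgIter2 w k ω‖ ^ 2 ∂μ')
            + 2 * (∫ ω, ‖avgIter2 w k ω - xstar‖ ^ 2 ∂μ') := by
        calc ∫ ω, ‖avgIter2 x k ω - xstar‖ ^ 2 ∂μ'
            ≤ ∫ ω, (2 * ‖avgIter2 x k ω - avgIter2 w k ω‖ ^ 2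
                + 2 * ‖avgIter2 w k ω - xstar‖ ^ 2) ∂μ' :=
              integral_mono (hInt7 k) hIntR hptw
          _ = 2 * (∫ ω, ‖avgIter2 x k ω - avgIter2 w k ω‖ ^ 2 ∂μ')
              + 2 * (∫ ω, ‖avgIter2 w k ω - xstar‖ ^ 2 ∂μ') := by
              rw [integral_add ((hInt5 k).const_mul 2) ((hInt4 k).const_mul 2),
                integral_const_mul, integral_const_mul]
      have he1 : 2 * (2 * Chat * (k : ℝ) * ((k : ℝ) + 1) / (μ ^ 2 * Sbar k))
          = 4 * Chat * (k : ℝ) * ((k : ℝ) + 1) / (μ ^ 2 * Sbar k) := by ring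
      have he2 : 2 * (4 * Chat * (k : ℝ) / (γ * μ ^ 2 * Sbar k))
          = 8 * Chat * (k : ℝ) / (γ * μ ^ 2 * Sbar k) := by ring
      linarith [h1, hiBound, hiiiBound]
    exact ⟨hiBound, hii, hiiiBound, hiv⟩
  refine ⟨main, ⟨24 * Chat / μ ^ 2 + 24 * Chat / (γ * μ ^ 2), ?_⟩,
    ⟨12 * Chat / (γ * μ ^ 2), ?_⟩⟩
  · intro k hk
    have h := (main k hk).2.2.2
    have hS : 0 < Sbar k := Sbar_pos hk
    have hk1 : (1 : ℝ) ≤ (k : ℝ) := by exact_mod_cast hk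
    have hk0 : (0 : ℝ) < (k : ℝ) := by linarith
    have hcube := Sbar_cube k
    have hs1 : 4 * (k : ℝ) ^ 2 * ((k : ℝ) + 1) ≤ 24 * Sbar k := by
      nlinarith [hcube, mul_nonneg (sq_nonneg ((k : ℝ))) (sub_nonneg.mpr hk1)]
    have hs2 : (k : ℝ) ^ 2 ≤ 3 * Sbar k := by
      nlinarith [hcube, mul_nonneg (sq_nonneg ((k : ℝ))) (sub_nonneg.mpr hk1)]
    have P1 : 4 * Chat * (k : ℝ) * ((k : ℝ) + 1) / (μ ^ 2 * Sbar k)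
        ≤ 24 * Chat / μ ^ 2 / (k : ℝ) := by
      rw [div_div, div_le_div_iff₀ (by positivity) (by positivity)]
      calc 4 * Chat * (k : ℝ) * ((k : ℝ) + 1) * (μ ^ 2 * (k : ℝ))
          = (Chat * μ ^ 2) * (4 * (k : ℝ) ^ 2 * ((k : ℝ) + 1)) := by ring
        _ ≤ (Chat * μ ^ 2) * (24 * Sbar k) :=
            mul_le_mul_of_nonneg_left hs1 (by positivity)
        _ = 24 * Chat * (μ ^ 2 * Sbar k) := by ring
    have P2 : 8 * Chat * (k : ℝ) / (γ * μ ^ 2 * Sbar k)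
        ≤ 24 * Chat / (γ * μ ^ 2) / (k : ℝ) := by
      rw [div_div, div_le_div_iff₀ (by positivity) (by positivity)]
      calc 8 * Chat * (k : ℝ) * (γ * μ ^ 2 * (k : ℝ))
          = (Chat * γ * μ ^ 2) * (8 * (k : ℝ) ^ 2) := by ring
        _ ≤ (Chat * γ * μ ^ 2) * (24 * Sbar k) := by
            refine mul_le_mul_of_nonneg_left ?_ (by positivity)
            linarith [hs2]
        _ = 24 * Chat * (γ * μ ^ 2 * Sbar k) := by ring
    have hadd : (24 * Chat / μ ^ 2 + 24 * Chat / (γ * μ ^ 2)) / (k : ℝ)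
        = 24 * Chat / μ ^ 2 / (k : ℝ) + 24 * Chat / (γ * μ ^ 2) / (k : ℝ) := add_div _ _ _
    rw [hadd]
    linarith [h, P1, P2]
  · intro k hk
    have h1 := (main k hk).2.1
    have h2 := (main k hk).2.2.1
    have hS : 0 < Sbar k := Sbar_pos hk
    have hk1 : (1 : ℝ) ≤ (k : ℝ) := by exact_mod_cast hk
    have hk0 : (0 : ℝ) < (k : ℝ) := by linarith
    have hcube := Sbar_cube k
    have P : 4 * Chat * (k : ℝ) / (γ * μ ^ 2 * Sbar k)
        ≤ 12 * Chat / (γ * μ ^ 2) / (k : ℝ) ^ 2 := by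
      rw [div_div, div_le_div_iff₀ (by positivity) (by positivity)]
      calc 4 * Chat * (k : ℝ) * (γ * μ ^ 2 * (k : ℝ) ^ 2)
          = (Chat * γ * μ ^ 2) * (4 * (k : ℝ) ^ 3) := by ring
        _ ≤ (Chat * γ * μ ^ 2) * (12 * Sbar k) := by
            refine mul_le_mul_of_nonneg_left ?_ (by positivity)
            linarith [hcube]
        _ = 12 * Chat * (γ * μ ^ 2 * Sbar k) := by ring
    linarith [h1, h2, P]
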